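/- Let X* ∈ ℝ^d be a random vector, t ∈ ℕ, B > 0, q > 0 with max_{j∈[d]} E|X*_j|^{t+q} ≤ B^{t+q}. Define the entrywise truncation X'(τ) with X'_j(τ) = X*_j·1[|X*_j| ≤ τ]. Then ‖E (X'(τ))^{⊗t} − E (X*)^{⊗t}‖_∞ ≤ t · B^{t+q} / τ^q, where the ℓ∞ norm is the maximum absolute entry of the order-t tensor. -/

import Mathlib

open MeasureTheory Finset

/-- Entrywise truncation at level τ. -/
noncomputable def trunc (τ x : ℝ) : ℝ := if |x| ≤ τ then x else 0

lemma trunc_abs_le (τ x : ℝ) (hτ : 0 ≤ τ) : |trunc τ x| ≤ τ := by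
  unfold trunc
  split
  · assumption
  · simpa using hτ

lemma measurable_trunc (τ : ℝ) : Measurable (trunc τ) := by
  unfold trunc
  exact Measurable.ite (measurableSet_le (measurable_id.abs) measurable_const)
    measurable_id measurable_const

lemma key_bound {t : ℕ} (ht : 1 ≤ t) (a : Fin t → ℝ) {q τ : ℝ} (hq : 0 < q) (hτ : 0 < τ) :
    |(∏ s, trunc τ (a s)) - ∏ s, a s| ≤ (∑ s, |a s| ^ ((t : ℝ) + q)) / τ ^ q := by
  have hsum_nonneg : 0 ≤ ∑ s, |a s| ^ ((t : ℝ) + q) :=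
    Finset.sum_nonneg fun s _ => Real.rpow_nonneg (abs_nonneg _) _
  have hτq : 0 < τ ^ q := Real.rpow_pos_of_pos hτ q
  by_cases h : ∀ s, |a s| ≤ τ
  · have : (∏ s, trunc τ (a s)) = ∏ s, a s := by
      apply Finset.prod_congr rfl
      intro s _
      simp [trunc, h s]
    rw [this, sub_self, abs_zero]
    exact div_nonneg hsum_nonneg hτq.le
  · push_neg at h
    obtain ⟨s0, hs0⟩ := h
    have hne : (Finset.univ : Finset (Fin t)).Nonempty := ⟨s0, Finset.mem_univ s0⟩
    set M := Finset.univ.sup' hne (fun s => |a s|) with hM_def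
    have hM : ∀ s, |a s| ≤ M := fun s => Finset.le_sup' (fun s => |a s|) (Finset.mem_univ s)
    have hτM : τ < M := lt_of_lt_of_le hs0 (hM s0)
    have hM0 : 0 < M := lt_trans hτ hτM
    have hprod0 : (∏ s, trunc τ (a s)) = 0 := by
      apply Finset.prod_eq_zero (Finset.mem_univ s0)
      simp [trunc, not_le.mpr hs0]
    rw [hprod0, zero_sub, abs_neg, Finset.abs_prod]
    have h1 : (∏ s, |a s|) ≤ M ^ t := by
      calc (∏ s : Fin t, |a s|) ≤ ∏ _s : Fin t, M :=
            Finset.prod_le_prod (fun s _ => abs_nonneg _) (fun s _ => hM s)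
        _ = M ^ t := by simp
    have h2 : M ^ t ≤ M ^ ((t : ℝ) + q) / τ ^ q := by
      rw [le_div_iff₀ hτq]
      have : M ^ ((t : ℝ) + q) = M ^ (t : ℝ) * M ^ q := Real.rpow_add hM0 _ _
      rw [this, Real.rpow_natCast]
      exact mul_le_mul_of_nonneg_left
        (Real.rpow_le_rpow hτ.le hτM.le hq.le) (pow_nonneg hM0.le t)
    have h3 : M ^ ((t : ℝ) + q) ≤ ∑ s, |a s| ^ ((t : ℝ) + q) := by
      obtain ⟨s1, _, hs1⟩ := Finset.exists_mem_eq_sup' hne (fun s => |a s|)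
      rw [← hM_def] at hs1
      rw [hs1]
      exact Finset.single_le_sum
        (fun s _ => Real.rpow_nonneg (abs_nonneg _) _) (Finset.mem_univ s1)
    calc (∏ s, |a s|) ≤ M ^ ((t : ℝ) + q) / τ ^ q := le_trans h1 h2
      _ ≤ (∑ s, |a s| ^ ((t : ℝ) + q)) / τ ^ q := by gcongr

lemma prod_abs_le {t : ℕ} (ht : 1 ≤ t) (a : Fin t → ℝ) {q : ℝ} (hq : 0 < q) :
    (∏ s, |a s|) ≤ (t : ℝ) + ∑ s, |a s| ^ ((t : ℝ) + q) := by
  have hsum_nonneg : 0 ≤ ∑ s, |a s| ^ ((t : ℝ) + q) :=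
    Finset.sum_nonneg fun s _ => Real.rpow_nonneg (abs_nonneg _) _
  have hne : (Finset.univ : Finset (Fin t)).Nonempty := by
    have : 0 < t := ht
    exact ⟨⟨0, this⟩, Finset.mem_univ _⟩
  set M := Finset.univ.sup' hne (fun s => |a s|) with hM_def
  have hM : ∀ s, |a s| ≤ M := fun s => Finset.le_sup' (fun s => |a s|) (Finset.mem_univ s)
  have hM0 : 0 ≤ M := le_trans (abs_nonneg _) (hM hne.choose)
  have h1 : (∏ s, |a s|) ≤ M ^ t := by
    calc (∏ s : Fin t, |a s|) ≤ ∏ _s : Fin t, M :=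
          Finset.prod_le_prod (fun s _ => abs_nonneg _) (fun s _ => hM s)
      _ = M ^ t := by simp
  by_cases hM1 : M ≤ 1
  · have : M ^ t ≤ 1 := pow_le_one₀ hM0 hM1
    have ht1 : (1 : ℝ) ≤ (t : ℝ) := by exact_mod_cast ht
    linarith [h1]
  · push_neg at hM1
    have h2 : M ^ t ≤ M ^ ((t : ℝ) + q) := by
      rw [← Real.rpow_natCast M t]
      exact Real.rpow_le_rpow_of_exponent_le hM1.le (by linarith)
    have h3 : M ^ ((t : ℝ) + q) ≤ ∑ s, |a s| ^ ((t : ℝ) + q) := by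
      obtain ⟨s1, _, hs1⟩ := Finset.exists_mem_eq_sup' hne (fun s => |a s|)
      rw [← hM_def] at hs1
      rw [hs1]
      exact Finset.single_le_sum
        (fun s _ => Real.rpow_nonneg (abs_nonneg _) _) (Finset.mem_univ s1)
    have ht0 : (0 : ℝ) ≤ (t : ℝ) := Nat.cast_nonneg t
    linarith

/-- If `max_j E|X_j|^{t+q} ≤ B^{t+q}`, then every entry of the difference between the
expected order-`t` tensor of the entrywise truncation `X'(τ)` and that of `X` is bounded
by `t · B^{t+q} / τ^q`. -/
theorem truncation_tensor_expectation_bound {Ω : Type*} [MeasurableSpace Ω]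
    (μ : Measure Ω) [IsProbabilityMeasure μ] {d : ℕ} (t : ℕ) (ht : 1 ≤ t)
    (X : Ω → Fin d → ℝ) (hmeas : ∀ j, Measurable fun ω => X ω j)
    (B q τ : ℝ) (hB : 0 < B) (hq : 0 < q) (hτ : 0 < τ)
    (hLp : ∀ j, MemLp (fun ω => X ω j) (ENNReal.ofReal ((t : ℝ) + q)) μ)
    (hmom : ∀ j, ∫ ω, |X ω j| ^ ((t : ℝ) + q) ∂μ ≤ B ^ ((t : ℝ) + q)) :
    ∀ j : Fin t → Fin d,
      |(∫ ω, ∏ s, trunc τ (X ω (j s)) ∂μ) - ∫ ω, ∏ s, X ω (j s) ∂μ| ≤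
        (t : ℝ) * B ^ ((t : ℝ) + q) / τ ^ q := by
  intro j
  have htq : (0 : ℝ) < (t : ℝ) + q := by positivity
  -- integrability of |X_j|^(t+q)
  have hint : ∀ k : Fin d, Integrable (fun ω => |X ω k| ^ ((t : ℝ) + q)) μ := by
    intro k
    have := (hLp k).integrable_norm_rpow (by simp [ENNReal.ofReal_eq_zero]; linarith)
      (by simp)
    simpa [ENNReal.toReal_ofReal htq.le, Real.norm_eq_abs] using this
  set f := fun ω => ∏ s, trunc τ (X ω (j s)) with hf_def
  set g := fun ω => ∏ s, X ω (j s) with hg_def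
  have hfm : Measurable f := by
    apply Finset.measurable_prod
    intro s _
    exact (measurable_trunc τ).comp (hmeas (j s))
  have hgm : Measurable g := by
    apply Finset.measurable_prod
    intro s _
    exact hmeas (j s)
  have hf : Integrable f μ := by
    apply Integrable.mono' (integrable_const (τ ^ t)) hfm.aestronglyMeasurable
    filter_upwards with ω
    rw [Real.norm_eq_abs, hf_def, Finset.abs_prod]
    calc (∏ s : Fin t, |trunc τ (X ω (j s))|) ≤ ∏ _s : Fin t, τ :=
        Finset.prod_le_prod (fun s _ => abs_nonneg _) (fun s _ => trunc_abs_le _ _ hτ.le)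
      _ = τ ^ t := by simp
  have hg : Integrable g μ := by
    apply Integrable.mono'
      ((integrable_const ((t : ℝ))).add
        (integrable_finset_sum Finset.univ (fun s _ => hint (j s))))
      hgm.aestronglyMeasurable
    filter_upwards with ω
    rw [Real.norm_eq_abs, hg_def, Finset.abs_prod]
    exact prod_abs_le ht (fun s => X ω (j s)) hq
  have hsum_int : Integrable (fun ω => (∑ s : Fin t, |X ω (j s)| ^ ((t : ℝ) + q)) / τ ^ q) μ :=
    (integrable_finset_sum Finset.univ (fun s _ => hint (j s))).div_const _
  rw [← integral_sub hf hg]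
  have step1 : |∫ ω, (f ω - g ω) ∂μ| ≤ ∫ ω, |f ω - g ω| ∂μ := by
    simpa [Real.norm_eq_abs] using norm_integral_le_integral_norm (μ := μ) (fun ω => f ω - g ω)
  have step2 : ∫ ω, |f ω - g ω| ∂μ ≤
      ∫ ω, (∑ s : Fin t, |X ω (j s)| ^ ((t : ℝ) + q)) / τ ^ q ∂μ := by
    apply integral_mono (hf.sub hg).abs hsum_int
    intro ω
    exact key_bound ht (fun s => X ω (j s)) hq hτ
  have step3 : ∫ ω, (∑ s : Fin t, |X ω (j s)| ^ ((t : ℝ) + q)) / τ ^ q ∂μ ≤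
      (t : ℝ) * B ^ ((t : ℝ) + q) / τ ^ q := by
    have hτq : 0 < τ ^ q := Real.rpow_pos_of_pos hτ q
    rw [integral_div, div_le_div_iff_of_pos_right hτq]
    rw [integral_finset_sum Finset.univ (fun s _ => hint (j s))]
    calc (∑ s : Fin t, ∫ ω, |X ω (j s)| ^ ((t : ℝ) + q) ∂μ)
        ≤ ∑ _s : Fin t, B ^ ((t : ℝ) + q) :=
          Finset.sum_le_sum (fun s _ => hmom (j s))
      _ = (t : ℝ) * B ^ ((t : ℝ) + q) := by simp [mul_comm]
  exact le_trans step1 (le_trans step2 step3)
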